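/- arXiv:1305.4028 — 5 statements merged into one kernel-verified Lean document; each statement's English description precedes it below -/
import Mathlib

section
/- The function B_ε(r) = (1/2)(f'(r)² + f(r)²/r²) + (1/(4ε²))(f(r)² − 1)² satisfies B_ε'(r) = −(2/ε²) f(r) f'(r)(1 − f(r)²) − (1/r)(f'(r) − f(r)/r)² for 0 < r < 1, whenever f solves the radial Ginzburg-Landau ODE −f'' − f'/r + f/r² = (1/ε²) f (1 − f²) on (0,1). -/
open Set

theorem energy_density_derivative
    (ε : ℝ) (hε : 0 < ε) (f : ℝ → ℝ)
    (hf : ContDiffOn ℝ 2 f (Ioo 0 1))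
    (hode : ∀ r ∈ Ioo (0:ℝ) 1,
      -(deriv (deriv f) r) - deriv f r / r + f r / r ^ 2
        = (1 / ε ^ 2) * f r * (1 - (f r) ^ 2)) :
    ∀ r ∈ Ioo (0:ℝ) 1,
      deriv (fun s => (1/2) * ((deriv f s) ^ 2 + (f s) ^ 2 / s ^ 2)
          + (1 / (4 * ε ^ 2)) * ((f s) ^ 2 - 1) ^ 2) r
        = -(2 / ε ^ 2) * f r * deriv f r * (1 - (f r) ^ 2)
          - (1 / r) * (deriv f r - f r / r) ^ 2 := by
  intro r hr
  have hr0 : (0:ℝ) < r := hr.1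
  have hrne : r ≠ 0 := ne_of_gt hr0
  have hopen : IsOpen (Ioo (0:ℝ) 1) := isOpen_Ioo
  have hf1 : ContDiffOn ℝ 1 (deriv f) (Ioo 0 1) :=
    hf.deriv_of_isOpen hopen (by norm_num)
  have hdf : DifferentiableAt ℝ f r :=
    ((hf.differentiableOn (by norm_num)).differentiableAt (hopen.mem_nhds hr))
  have hddf : DifferentiableAt ℝ (deriv f) r :=
    ((hf1.differentiableOn (by norm_num)).differentiableAt (hopen.mem_nhds hr))
  have h1 : HasDerivAt f (deriv f r) r := hdf.hasDerivAt
  have h2 : HasDerivAt (deriv f) (deriv (deriv f) r) r := hddf.hasDerivAt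
  have hid : HasDerivAt (fun s : ℝ => s) 1 r := hasDerivAt_id r
  have hB : HasDerivAt (fun s => (1/2) * ((deriv f s) ^ 2 + (f s) ^ 2 / s ^ 2)
          + (1 / (4 * ε ^ 2)) * ((f s) ^ 2 - 1) ^ 2)
      ((1/2) * ((2 * deriv f r * deriv (deriv f) r)
        + ((2 * f r * deriv f r) * r ^ 2 - (f r) ^ 2 * (2 * r ^ (2-1) * 1)) / (r ^ 2) ^ 2)
        + (1 / (4 * ε ^ 2)) * (2 * ((f r) ^ 2 - 1) * (2 * f r * deriv f r))) r := by
    have h := (((h2.pow 2).add (((h1.pow 2).div (hid.pow 2)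
      (by simp [hrne])))).const_mul (1/2)).add
      ((((h1.pow 2).sub_const 1).pow 2).const_mul (1 / (4 * ε ^ 2)))
    refine h.congr_deriv ?_
    norm_num
  rw [hB.deriv]
  have hode' := hode r hr
  have hf2 : deriv (deriv f) r = - deriv f r / r + f r / r ^ 2
      - (1 / ε ^ 2) * f r * (1 - (f r) ^ 2) := by linear_combination -hode'
  rw [hf2]
  have hεne : ε ≠ 0 := ne_of_gt hε
  field_simp
  ring
end

section
/- If f solves the radial Ginzburg-Landau ODE −f'' − f'/r + f/r² = (1/ε²) f (1 − f²) on (0,1) with 0 ≤ f ≤ 1 and f' > 0 on (0,1), then the energy density B_ε(r) = (1/2)(f'(r)² + f(r)²/r²) + (1/(4ε²))(f(r)² − 1)² is nonincreasing on (0,1). -/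
open Set

theorem energy_density_antitone
    (ε : ℝ) (hε : 0 < ε) (f : ℝ → ℝ)
    (hf : ContDiffOn ℝ 2 f (Ioo 0 1))
    (hbound : ∀ r ∈ Ioo (0:ℝ) 1, 0 ≤ f r ∧ f r ≤ 1)
    (hf' : ∀ r ∈ Ioo (0:ℝ) 1, 0 < deriv f r)
    (hode : ∀ r ∈ Ioo (0:ℝ) 1,
      -(deriv (deriv f) r) - deriv f r / r + f r / r ^ 2
        = (1 / ε ^ 2) * f r * (1 - (f r) ^ 2)) :
    AntitoneOn (fun s => (1/2) * ((deriv f s) ^ 2 + (f s) ^ 2 / s ^ 2)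
        + (1 / (4 * ε ^ 2)) * ((f s) ^ 2 - 1) ^ 2) (Ioo 0 1) := by
  have hU : IsOpen (Ioo (0:ℝ) 1) := isOpen_Ioo
  have hd1 : DifferentiableOn ℝ f (Ioo 0 1) := hf.differentiableOn (by norm_num)
  have hc1 : ContDiffOn ℝ 1 (deriv f) (Ioo 0 1) :=
    hf.deriv_of_isOpen hU (by norm_num : (1:WithTop ℕ∞) + 1 ≤ 2)
  have hd2 : DifferentiableOn ℝ (deriv f) (Ioo 0 1) := hc1.differentiableOn (by norm_num)
  -- derivative of the energy density at each point
  have key : ∀ s ∈ Ioo (0:ℝ) 1,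
      HasDerivAt (fun s => (1/2) * ((deriv f s) ^ 2 + (f s) ^ 2 / s ^ 2)
        + (1 / (4 * ε ^ 2)) * ((f s) ^ 2 - 1) ^ 2)
        ((1/2) * (2 * deriv f s * deriv (deriv f) s
            + (2 * f s * deriv f s * s ^ 2 - f s ^ 2 * (2 * s)) / (s ^ 2) ^ 2)
          + (1 / (4 * ε ^ 2)) * (2 * (f s ^ 2 - 1) * (2 * f s * deriv f s))) s := by
    intro s hs
    have hs0 : (0:ℝ) < s := hs.1
    have hfd : HasDerivAt f (deriv f s) s :=
      (hd1.differentiableAt (hU.mem_nhds hs)).hasDerivAt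
    have hfd2 : HasDerivAt (deriv f) (deriv (deriv f) s) s :=
      (hd2.differentiableAt (hU.mem_nhds hs)).hasDerivAt
    have h1 : HasDerivAt (fun s => (deriv f s) ^ 2)
        (2 * deriv f s * deriv (deriv f) s) s := by
      simpa using hfd2.fun_pow 2
    have hsq : HasDerivAt (fun s : ℝ => s ^ 2) (2 * s) s := by
      simpa using hasDerivAt_pow 2 s
    have hf2 : HasDerivAt (fun s => (f s) ^ 2) (2 * f s * deriv f s) s := by
      simpa using hfd.fun_pow 2
    have h2 : HasDerivAt (fun s => (f s) ^ 2 / s ^ 2)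
        ((2 * f s * deriv f s * s ^ 2 - f s ^ 2 * (2 * s)) / (s ^ 2) ^ 2) s :=
      hf2.div hsq (by positivity)
    have h3 : HasDerivAt (fun s => ((f s) ^ 2 - 1) ^ 2)
        (2 * (f s ^ 2 - 1) * (2 * f s * deriv f s)) s := by
      have := ((hf2.sub_const 1).fun_pow 2)
      simpa using this
    exact ((h1.add h2).const_mul (1/2)).add (h3.const_mul (1 / (4 * ε ^ 2)))
  apply antitoneOn_of_deriv_nonpos (convex_Ioo 0 1)
  · intro s hs
    exact ((key s hs).continuousAt).continuousWithinAt
  · intro s hs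
    rw [interior_Ioo] at hs
    exact ((key s hs).differentiableAt).differentiableWithinAt
  · intro s hs
    rw [interior_Ioo] at hs
    rw [(key s hs).deriv]
    set a := f s with ha
    set b := deriv f s with hb
    set c := deriv (deriv f) s with hcc
    have hs0 : (0:ℝ) < s := hs.1
    have hb0 : 0 < b := hf' s hs
    have ha0 : 0 ≤ a := (hbound s hs).1
    have ha1 : a ≤ 1 := (hbound s hs).2
    have hode' := hode s hs
    have hc : c = -(b / s) + a / s ^ 2 - (1 / ε ^ 2) * a * (1 - a ^ 2) := by
      linarith [hode']
    rw [hc]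
    have hε2 : (0:ℝ) < ε ^ 2 := by positivity
    have heq : (1/2) * (2 * b * (-(b / s) + a / s ^ 2 - (1 / ε ^ 2) * a * (1 - a ^ 2))
            + (2 * a * b * s ^ 2 - a ^ 2 * (2 * s)) / (s ^ 2) ^ 2)
          + (1 / (4 * ε ^ 2)) * (2 * (a ^ 2 - 1) * (2 * a * b))
        = -((b - a / s) ^ 2 / s) + (2 / ε ^ 2) * (a * b * (a ^ 2 - 1)) := by
      field_simp
      ring
    rw [heq]
    have t1 : -((b - a / s) ^ 2 / s) ≤ 0 := by
      have : 0 ≤ (b - a / s) ^ 2 / s := by positivity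
      linarith
    have t2 : (2 / ε ^ 2) * (a * b * (a ^ 2 - 1)) ≤ 0 := by
      have h1 : a * b * (a ^ 2 - 1) ≤ 0 := by
        nlinarith [mul_nonpos_of_nonneg_of_nonpos
          (mul_nonneg (mul_nonneg ha0 hb0.le) (by linarith : (0:ℝ) ≤ a + 1))
          (by linarith : a - 1 ≤ 0)]
      have h2 : 0 ≤ 2 / ε ^ 2 := by positivity
      exact mul_nonpos_of_nonneg_of_nonpos h2 h1
    linarith
end

section
/- Let f : (0,∞) → ℝ be defined by f(r) = f̃(r) for 0 < r ≤ 1 and f(r) = 1 for r > 1, where f̃ solves the radial Ginzburg-Landau ODE on (0,1) with f̃(1) = 1, 0 ≤ f̃ ≤ 1, f̃' > 0. Then the extended energy density B_ε(r) = (1/2)(f'(r)² + f(r)²/r²) + (1/(4ε²))(f(r)² − 1)², which equals 1/(2r²) for r > 1, is nonincreasing on (0,∞). -/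
open Set Filter Topology

theorem extended_energy_density_antitone
    (ε : ℝ) (hε : 0 < ε) (f : ℝ → ℝ)
    (hf : ContDiffOn ℝ 2 f (Ioo 0 1))
    (hcont : ContinuousOn f (Ioi 0))
    (hbound : ∀ r ∈ Ioo (0:ℝ) 1, 0 ≤ f r ∧ f r ≤ 1)
    (hf' : ∀ r ∈ Ioo (0:ℝ) 1, 0 < deriv f r)
    (hf1 : f 1 = 1)
    (hext : ∀ r : ℝ, 1 < r → f r = 1)
    (hode : ∀ r ∈ Ioo (0:ℝ) 1,
      -(deriv (deriv f) r) - deriv f r / r + f r / r ^ 2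
        = (1 / ε ^ 2) * f r * (1 - (f r) ^ 2)) :
    AntitoneOn (fun s => (1/2) * ((deriv f s) ^ 2 + (f s) ^ 2 / s ^ 2)
        + (1 / (4 * ε ^ 2)) * ((f s) ^ 2 - 1) ^ 2) (Ioi 0) := by
  set B : ℝ → ℝ := fun s => (1/2) * ((deriv f s) ^ 2 + (f s) ^ 2 / s ^ 2)
        + (1 / (4 * ε ^ 2)) * ((f s) ^ 2 - 1) ^ 2 with hBdef
  have hopen : IsOpen (Ioo (0:ℝ) 1) := isOpen_Ioo
  have hε2 : (0:ℝ) < ε ^ 2 := by positivity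
  have hdf : DifferentiableOn ℝ f (Ioo 0 1) := hf.differentiableOn (by norm_num)
  have hdf2 : ContDiffOn ℝ 1 (deriv f) (Ioo 0 1) := by
    have := hf.deriv_of_isOpen hopen (m := 1) (by norm_num)
    exact this
  have hdf2' : DifferentiableOn ℝ (deriv f) (Ioo 0 1) := hdf2.differentiableOn one_ne_zero
  -- key derivative computation on Ioo 0 1
  have key : ∀ r ∈ Ioo (0:ℝ) 1, ∃ D, HasDerivAt B D r ∧ D ≤ 0 := by
    intro r hr
    have hr0 : (0:ℝ) < r := hr.1
    have hr1 : r < 1 := hr.2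
    have hrne : r ≠ 0 := ne_of_gt hr0
    have hfr : HasDerivAt f (deriv f r) r :=
      (hdf.differentiableAt (hopen.mem_nhds hr)).hasDerivAt
    have hfr2 : HasDerivAt (deriv f) (deriv (deriv f) r) r :=
      (hdf2'.differentiableAt (hopen.mem_nhds hr)).hasDerivAt
    set a := f r
    set b := deriv f r
    set c := deriv (deriv f) r
    have h1 : HasDerivAt (fun s => (deriv f s) ^ 2) (2 * b * c) r := by
      have := hfr2.pow 2
      simpa [Pi.pow_def, mul_comm, mul_assoc, mul_left_comm] using this
    have h2 : HasDerivAt (fun s => (f s) ^ 2) (2 * a * b) r := by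
      have := hfr.pow 2
      simpa [Pi.pow_def, mul_comm, mul_assoc, mul_left_comm] using this
    have h3 : HasDerivAt (fun s : ℝ => s ^ 2) (2 * r) r := by
      simpa using hasDerivAt_pow 2 r
    have h4 : HasDerivAt (fun s => (f s) ^ 2 / s ^ 2)
        ((2 * a * b * r ^ 2 - a ^ 2 * (2 * r)) / (r ^ 2) ^ 2) r := h2.div h3 (by positivity)
    have h5 : HasDerivAt (fun s => ((f s) ^ 2 - 1) ^ 2)
        (2 * (a ^ 2 - 1) * (2 * a * b)) r := by
      have := (h2.sub_const 1).pow 2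
      simpa [Pi.pow_def, mul_comm, mul_assoc, mul_left_comm] using this
    have hB : HasDerivAt B
        ((1/2) * (2 * b * c + (2 * a * b * r ^ 2 - a ^ 2 * (2 * r)) / (r ^ 2) ^ 2)
          + (1 / (4 * ε ^ 2)) * (2 * (a ^ 2 - 1) * (2 * a * b))) r :=
      ((h1.add h4).const_mul (1/2)).add (h5.const_mul (1 / (4 * ε ^ 2)))
    refine ⟨_, hB, ?_⟩
    have hcval : c = -(b / r) + a / r ^ 2 - (1 / ε ^ 2) * a * (1 - a ^ 2) := by
      have := hode r hr
      linarith
    obtain ⟨ha0, ha1⟩ := hbound r hr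
    have hb0 : 0 < b := hf' r hr
    rw [hcval]
    have hkey : (1/2) * (2 * b * (-(b / r) + a / r ^ 2 - (1 / ε ^ 2) * a * (1 - a ^ 2))
          + (2 * a * b * r ^ 2 - a ^ 2 * (2 * r)) / (r ^ 2) ^ 2)
          + (1 / (4 * ε ^ 2)) * (2 * (a ^ 2 - 1) * (2 * a * b))
        = -(1/r) * (b - a / r) ^ 2 + (2 / ε ^ 2) * (a * b * (a ^ 2 - 1)) := by
      field_simp
      ring
    rw [hkey]
    have t1 : -(1/r) * (b - a / r) ^ 2 ≤ 0 := by
      have : 0 ≤ (1/r) * (b - a / r) ^ 2 := by positivity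
      linarith
    have t2 : (2 / ε ^ 2) * (a * b * (a ^ 2 - 1)) ≤ 0 := by
      have h1 : a ^ 2 - 1 ≤ 0 := by nlinarith
      have h2 : a * b * (a ^ 2 - 1) ≤ 0 := by
        have := mul_nonneg ha0 hb0.le
        nlinarith
      have h3 : 0 < 2 / ε ^ 2 := by positivity
      exact mul_nonpos_of_nonneg_of_nonpos h3.le h2
    linarith
  -- B is antitone on Ioo 0 1
  have hBdiff : DifferentiableOn ℝ B (Ioo 0 1) := by
    intro r hr
    obtain ⟨D, hD, -⟩ := key r hr
    exact hD.differentiableAt.differentiableWithinAt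
  have hanti : AntitoneOn B (Ioo 0 1) := by
    refine antitoneOn_of_deriv_nonpos (convex_Ioo 0 1) hBdiff.continuousOn ?_ ?_
    · rwa [interior_Ioo]
    · intro r hr
      rw [interior_Ioo] at hr
      obtain ⟨D, hD, hDle⟩ := key r hr
      rw [hD.deriv]; exact hDle
  -- deriv f 1 = 0
  have hderiv1 : deriv f 1 = 0 := by
    by_cases h : DifferentiableAt ℝ f 1
    · have h1 : HasDerivWithinAt f (deriv f 1) (Ici 1) 1 := h.hasDerivAt.hasDerivWithinAt
      have h2 : HasDerivWithinAt f 0 (Ici 1) 1 := by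
        have hc : HasDerivWithinAt (fun _ : ℝ => (1:ℝ)) 0 (Ici 1) 1 :=
          (hasDerivAt_const 1 (1:ℝ)).hasDerivWithinAt
        refine hc.congr (fun t ht => ?_) hf1
        rcases eq_or_lt_of_le (mem_Ici.mp ht) with h' | h'
        · rw [← h']; exact hf1
        · exact hext t h'
      have := h1.derivWithin (uniqueDiffOn_Ici 1 1 Set.self_mem_Ici)
      rw [← this, h2.derivWithin (uniqueDiffOn_Ici 1 1 Set.self_mem_Ici)]
    · exact deriv_zero_of_not_differentiableAt h
  -- values for r > 1
  have hgt : ∀ y : ℝ, 1 < y → B y = 1 / (2 * y ^ 2) := by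
    intro y hy
    have hfy : f y = 1 := hext y hy
    have hdy : deriv f y = 0 := by
      have hevent : f =ᶠ[𝓝 y] fun _ => (1:ℝ) := by
        filter_upwards [Ioi_mem_nhds hy] with t ht using hext t ht
      rw [hevent.deriv_eq, deriv_const]
    simp only [hBdef, hfy, hdy]
    have : y ^ 2 ≠ 0 := by positivity
    field_simp
    ring
  have hB1 : B 1 = 1 / 2 := by
    simp only [hBdef, hf1, hderiv1]
    norm_num
  -- B x ≥ 1/2 for x ∈ Ioo 0 1
  have hhalf : ∀ x ∈ Ioo (0:ℝ) 1, 1 / 2 ≤ B x := by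
    intro x hx
    have hne : (𝓝[Ioo x 1] (1:ℝ)).NeBot := by
      rw [nhdsWithin_Ioo_eq_nhdsLT hx.2]
      infer_instance
    have htend : Tendsto (fun t => (1/2) * ((f t) ^ 2 / t ^ 2)) (𝓝[Ioo x 1] 1) (𝓝 (1/2)) := by
      have hc1 : ContinuousWithinAt f (Ioi 0) 1 := hcont 1 (by norm_num)
      have hc2 : ContinuousWithinAt (fun t => (1/2) * ((f t) ^ 2 / t ^ 2)) (Ioi 0) 1 := by
        refine ContinuousWithinAt.mul continuousWithinAt_const ?_
        exact (hc1.pow 2).div ((continuousWithinAt_id.pow 2)) (by norm_num)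
      have hsub : Ioo x 1 ⊆ Ioi 0 := fun t ht => lt_trans hx.1 ht.1
      have h' := hc2.mono hsub
      unfold ContinuousWithinAt at h'
      simpa [hf1] using h'
    refine le_of_tendsto htend ?_
    filter_upwards [self_mem_nhdsWithin] with t ht
    have h1 : B t ≤ B x := hanti ⟨hx.1, hx.2⟩ ⟨lt_trans hx.1 ht.1, ht.2⟩ ht.1.le
    have h2 : (1/2) * ((f t) ^ 2 / t ^ 2) ≤ B t := by
      have ht0 : (0:ℝ) < t := lt_trans hx.1 ht.1
      simp only [hBdef]
      have : 0 ≤ (deriv f t) ^ 2 := sq_nonneg _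
      have : 0 ≤ (1 / (4 * ε ^ 2)) * ((f t) ^ 2 - 1) ^ 2 := by positivity
      nlinarith [sq_nonneg (deriv f t)]
    exact h2.trans h1
  -- main case analysis
  intro x hx y hy hxy
  simp only [mem_Ioi] at hx hy
  rcases eq_or_lt_of_le hxy with rfl | hlt
  · exact le_refl _
  show B y ≤ B x
  rcases lt_trichotomy y 1 with hy1 | hy1 | hy1
  · exact hanti ⟨hx, lt_trans hlt hy1⟩ ⟨hy, hy1⟩ hxy
  · subst hy1
    rw [hB1]
    exact hhalf x ⟨hx, hlt⟩
  · rw [hgt y hy1]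
    have h2 : 1 / (2 * y ^ 2) ≤ 1 / 2 := by
      have hy2 : (1:ℝ) ≤ y ^ 2 := one_le_pow₀ (le_of_lt hy1)
      have : (2:ℝ) ≤ 2 * y ^ 2 := by linarith
      exact one_div_le_one_div_of_le (by norm_num) this
    rcases lt_trichotomy x 1 with hx1 | hx1 | hx1
    · exact le_trans h2 (hhalf x ⟨hx, hx1⟩)
    · subst hx1; rw [hB1]; exact h2
    · rw [hgt x hx1]
      have hxy2 : x ^ 2 ≤ y ^ 2 := pow_le_pow_left₀ (by positivity) hlt.le 2
      have : 2 * x ^ 2 ≤ 2 * y ^ 2 := by linarith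
      exact one_div_le_one_div_of_le (by positivity) this
end

section
/- Existence of a center making moments vanish (Weinberger's topological argument): let Ω ⊂ ℝ² be a bounded measurable set of positive measure and let g : [0,∞) → [0,1] be continuous, nondecreasing, with g(0) = 0 and g(r) = 1 for r ≥ 1. Then there exists a point p ∈ ℝ² such that ∫_Ω g(|x − p|) (x − p)/|x − p| dx = 0 (both components of the vector integral vanish). -/
open Set MeasureTheory

set_option maxHeartbeats 1000000 in
theorem weinberger_center
    (Ω : Set (EuclideanSpace ℝ (Fin 2))) (hΩm : MeasurableSet Ω)
    (hΩb : Bornology.IsBounded Ω) (hΩpos : 0 < volume Ω)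
    (g : ℝ → ℝ) (hgc : Continuous g) (hgm : MonotoneOn g (Ici 0))
    (hg01 : ∀ r ∈ Ici (0:ℝ), 0 ≤ g r ∧ g r ≤ 1)
    (hg0 : g 0 = 0) (hg1 : ∀ r : ℝ, 1 ≤ r → g r = 1) :
    ∃ p : EuclideanSpace ℝ (Fin 2),
      (∫ x in Ω, (g ‖x - p‖ / ‖x - p‖) • (x - p)) = 0 := by
  classical
  set G : ℝ → ℝ := fun r => ∫ t in (0:ℝ)..r, g t with hGdef
  set μ : Measure (EuclideanSpace ℝ (Fin 2)) := volume.restrict Ω with hμ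
  have hμfin : μ Set.univ < ⊤ := by
    rw [hμ, Measure.restrict_apply MeasurableSet.univ, Set.univ_inter]
    exact hΩb.measure_lt_top
  haveI : IsFiniteMeasure μ := ⟨hμfin⟩
  -- FTC : G' = g
  have hGd : ∀ r : ℝ, HasDerivAt G (g r) r := fun r =>
    intervalIntegral.integral_hasDerivAt_right (hgc.intervalIntegrable 0 r)
      hgc.stronglyMeasurable.stronglyMeasurableAtFilter hgc.continuousAt
  have hGc : Continuous G := by
    have : Differentiable ℝ G := fun r => (hGd r).differentiableAt
    exact this.continuous
  have hG0 : G 0 = 0 := by simp [hGdef]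
  -- basic bounds on G
  have hGnonneg : ∀ r : ℝ, 0 ≤ r → 0 ≤ G r := by
    intro r hr
    apply intervalIntegral.integral_nonneg hr
    intro t ht
    exact (hg01 t ht.1).1
  have hGle : ∀ r : ℝ, 0 ≤ r → G r ≤ g r * r := by
    intro r hr
    have : G r ≤ ∫ _ in (0:ℝ)..r, g r := by
      apply intervalIntegral.integral_mono_on hr (hgc.intervalIntegrable 0 r)
        (intervalIntegrable_const)
      intro t ht
      exact hgm ht.1 (le_trans ht.1 ht.2) ht.2
    simpa [mul_comm] using this
  have hGcoer : ∀ r : ℝ, 0 ≤ r → r - 1 ≤ G r := by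
    intro r hr
    rcases le_or_gt r 1 with h1 | h1
    · linarith [hGnonneg r hr]
    · have hsplit : G r = G 1 + ∫ t in (1:ℝ)..r, g t := by
        rw [hGdef]
        exact (intervalIntegral.integral_add_adjacent_intervals
          (hgc.intervalIntegrable 0 1) (hgc.intervalIntegrable 1 r)).symm
      have h2 : (∫ t in (1:ℝ)..r, g t) = r - 1 := by
        have : (∫ t in (1:ℝ)..r, g t) = ∫ _ in (1:ℝ)..r, (1:ℝ) := by
          apply intervalIntegral.integral_congr
          intro t ht
          rw [uIcc_of_le h1.le] at ht
          exact hg1 t ht.1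
        simp [this]
      have := hGnonneg 1 zero_le_one
      rw [hsplit, h2]; linarith
  -- Lipschitz (with constant 1) of p ↦ G ‖x - p‖
  have hGlip : ∀ x : EuclideanSpace ℝ (Fin 2), LipschitzWith 1 (fun p : (EuclideanSpace ℝ (Fin 2)) => G ‖x - p‖) := by
    intro x
    apply LipschitzWith.of_dist_le_mul
    intro p q
    have hpq : dist ‖x - p‖ ‖x - q‖ ≤ dist p q := by
      rw [Real.dist_eq]
      calc |‖x - p‖ - ‖x - q‖| ≤ ‖(x - p) - (x - q)‖ := abs_norm_sub_norm_le _ _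
        _ = dist p q := by
            rw [show (x - p) - (x - q) = q - p by abel, norm_sub_rev, dist_eq_norm]
    set a := ‖x - p‖; set b := ‖x - q‖
    have ha : (0:ℝ) ≤ a := norm_nonneg _
    have hb : (0:ℝ) ≤ b := norm_nonneg _
    have : dist (G a) (G b) ≤ dist a b := by
      rw [Real.dist_eq, Real.dist_eq]
      have hiff : G a - G b = ∫ t in b..a, g t := by
        rw [hGdef]
        rw [eq_comm, intervalIntegral.integral_interval_sub_left (hgc.intervalIntegrable 0 a)
          (hgc.intervalIntegrable 0 b)]
      rw [hiff]
      have := intervalIntegral.norm_integral_le_of_norm_le_const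
        (C := 1) (f := g) (a := b) (b := a) ?_
      · simpa [Real.norm_eq_abs] using this
      · intro t ht
        have ht0 : 0 ≤ t := by
          rcases Set.mem_uIoc.mp ht with ⟨h1, _⟩ | ⟨h1, _⟩
          · exact (lt_of_le_of_lt hb h1).le
          · exact (lt_of_le_of_lt ha h1).le
        rw [Real.norm_eq_abs, abs_of_nonneg (hg01 t ht0).1]
        exact (hg01 t ht0).2
    calc dist (G a) (G b) ≤ dist a b := this
      _ ≤ dist p q := hpq
      _ = 1 * dist p q := (one_mul _).symm
  -- the derivative candidate
  set F' : (EuclideanSpace ℝ (Fin 2)) → (EuclideanSpace ℝ (Fin 2)) → ((EuclideanSpace ℝ (Fin 2)) →L[ℝ] ℝ) :=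
    fun x p => (g ‖x - p‖ / ‖x - p‖) • (innerSL ℝ (p - x)) with hF'def
  have hkey : ∀ x p : EuclideanSpace ℝ (Fin 2), HasFDerivAt (fun q => G ‖x - q‖) (F' x p) p := by
    intro x p
    rcases eq_or_ne x p with h | h
    · -- degenerate case x = p : derivative is 0
      subst h
      have hF'0 : F' x x = 0 := by
        simp [hF'def, hg0]
      rw [hF'0]
      rw [hasFDerivAt_iff_isLittleO_nhds_zero]
      rw [Asymptotics.isLittleO_iff]
      intro ε hε
      have hcont : Filter.Tendsto (fun h : EuclideanSpace ℝ (Fin 2) => g ‖x - (x + h)‖)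
          (nhds 0) (nhds 0) := by
        have h1 : Filter.Tendsto (fun h : EuclideanSpace ℝ (Fin 2) => ‖x - (x + h)‖)
            (nhds 0) (nhds 0) := by
          have hc : Continuous (fun h : EuclideanSpace ℝ (Fin 2) => ‖x - (x + h)‖) := by
            continuity
          simpa using hc.tendsto 0
        have := (hgc.tendsto 0).comp h1
        simpa [hg0, Function.comp_def] using this
      filter_upwards [hcont.eventually (gt_mem_nhds hε)] with h hh
      have h3 : ‖x - (x + h)‖ = ‖h‖ := by rw [show x - (x + h) = -h by abel, norm_neg]
      rw [h3] at hh
      have hnn : (0:ℝ) ≤ ‖h‖ := norm_nonneg h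
      have h1 : G ‖h‖ ≤ g ‖h‖ * ‖h‖ := hGle _ hnn
      have h2 : 0 ≤ G ‖h‖ := hGnonneg _ hnn
      simp only [ContinuousLinearMap.zero_apply, sub_zero, h3, sub_self, norm_zero, hG0]
      rw [Real.norm_eq_abs, abs_of_nonneg h2]
      calc G ‖h‖ ≤ g ‖h‖ * ‖h‖ := h1
        _ ≤ ε * ‖h‖ := mul_le_mul_of_nonneg_right hh.le hnn
    · -- smooth case
      have hne : x - p ≠ 0 := sub_ne_zero.mpr h
      have hnorm_pos : (0:ℝ) < ‖x - p‖ := norm_pos_iff.mpr hne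
      -- derivative of q ↦ ‖x - q‖² at p
      have hsq : HasFDerivAt (fun q : EuclideanSpace ℝ (Fin 2) => ‖x - q‖ ^ 2)
          (2 • ((innerSL ℝ (x - p)).comp (-(ContinuousLinearMap.id ℝ (EuclideanSpace ℝ (Fin 2)))))) p := by
        have hf : HasFDerivAt (fun q : EuclideanSpace ℝ (Fin 2) => x - q)
            (-(ContinuousLinearMap.id ℝ (EuclideanSpace ℝ (Fin 2)))) p :=
          (hasFDerivAt_id (𝕜 := ℝ) p).const_sub x
        exact hf.norm_sq
      have hsqrt : HasDerivAt Real.sqrt (1 / (2 * Real.sqrt (‖x - p‖ ^ 2))) (‖x - p‖ ^ 2) :=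
        Real.hasDerivAt_sqrt (by positivity)
      have hcomp := hsqrt.comp_hasFDerivAt p hsq
      have heq : (Real.sqrt ∘ fun q : EuclideanSpace ℝ (Fin 2) => ‖x - q‖ ^ 2)
          = fun q : EuclideanSpace ℝ (Fin 2) => ‖x - q‖ := by
        funext q; simp only [Function.comp_apply]; rw [Real.sqrt_sq (norm_nonneg _)]
      rw [heq] at hcomp
      -- now compose with G
      have hcompG := (hGd ‖x - p‖).comp_hasFDerivAt p hcomp
      have hEq : F' x p = g ‖x - p‖ • (1 / (2 * Real.sqrt (‖x - p‖ ^ 2))) •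
          (2 • ((innerSL ℝ (x - p)).comp
            (-(ContinuousLinearMap.id ℝ (EuclideanSpace ℝ (Fin 2)))))) := by
        ext w
        simp only [hF'def, ContinuousLinearMap.smul_apply, ContinuousLinearMap.coe_smul',
          Pi.smul_apply, ContinuousLinearMap.coe_comp', Function.comp_apply,
          ContinuousLinearMap.neg_apply, ContinuousLinearMap.coe_id', id_eq,
          innerSL_apply_apply, smul_eq_mul]
        rw [Real.sqrt_sq (norm_nonneg _)]
        have hinner1 : (inner ℝ (p - x) w : ℝ) = -(inner ℝ (x - p) w : ℝ) := by
          rw [show p - x = -(x - p) by abel, inner_neg_left]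
        have hinner2 : (inner ℝ (x - p) (-w) : ℝ) = -(inner ℝ (x - p) w : ℝ) :=
          inner_neg_right _ _
        rw [hinner1, hinner2]
        field_simp
        ring
      rw [hEq]
      exact hcompG
  -- measurability of F' · p
  have hF'meas : ∀ p : EuclideanSpace ℝ (Fin 2), AEStronglyMeasurable (fun x => F' x p) μ := by
    intro p
    show AEStronglyMeasurable ((fun x => g ‖x - p‖ / ‖x - p‖) • (fun x => innerSL ℝ (p - x))) μ
    apply AEStronglyMeasurable.smul
    · apply Measurable.aestronglyMeasurable
      exact (hgc.measurable.comp ((continuous_id.sub continuous_const).norm.measurable)).div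
        ((continuous_id.sub continuous_const).norm.measurable)
    · apply Continuous.aestronglyMeasurable
      exact (innerSL ℝ).continuous.comp (continuous_const.sub continuous_id)
  -- integrability of the potential integrand
  obtain ⟨R, hR⟩ := hΩb.subset_closedBall 0
  have hΩsub : Ω ⊆ Metric.closedBall 0 R := hR
  have hint : ∀ p : EuclideanSpace ℝ (Fin 2), Integrable (fun x => G ‖x - p‖) μ := by
    intro p
    rw [hμ]
    have hcont : Continuous (fun x : (EuclideanSpace ℝ (Fin 2)) => G ‖x - p‖) :=
      hGc.comp (continuous_id.sub continuous_const).norm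
    exact ((hcont.continuousOn.integrableOn_compact
      (isCompact_closedBall 0 R)).mono_set hΩsub)
  -- parametric differentiation
  set Φ : (EuclideanSpace ℝ (Fin 2)) → ℝ := fun p => ∫ x, G ‖x - p‖ ∂μ with hΦdef
  have hΦd : ∀ p : EuclideanSpace ℝ (Fin 2), Integrable (fun x => F' x p) μ ∧
      HasFDerivAt Φ (∫ x, F' x p ∂μ) p := by
    intro p
    apply hasFDerivAt_integral_of_dominated_loc_of_lip (s := Metric.ball p 1) (bound := fun _ => (1:ℝ))
      (Metric.ball_mem_nhds p zero_lt_one)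
    · filter_upwards with q
      exact (hGc.comp (continuous_id.sub continuous_const).norm).aestronglyMeasurable
    · exact hint p
    · exact hF'meas p
    · filter_upwards with x
      have h1 : Real.nnabs (1:ℝ) = 1 := by ext; simp
      rw [h1]
      exact (hGlip x).lipschitzOnWith
    · exact integrable_const 1
    · filter_upwards with x
      exact hkey x p
  have hΦc : Continuous Φ := by
    apply continuous_iff_continuousAt.mpr
    intro p
    exact (hΦd p).2.continuousAt
  -- coercivity
  have hvol_pos : 0 < (μ Set.univ).toReal := by
    apply ENNReal.toReal_pos
    · rw [hμ, Measure.restrict_apply MeasurableSet.univ, Set.univ_inter]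
      exact hΩpos.ne'
    · exact hμfin.ne
  set volT := (μ Set.univ).toReal with hvolT
  have hΦlb : ∀ p : EuclideanSpace ℝ (Fin 2), (‖p‖ - R - 1) * volT ≤ Φ p := by
    intro p
    have hae : ∀ᵐ x ∂μ, ‖p‖ - R - 1 ≤ G ‖x - p‖ := by
      rw [hμ]
      filter_upwards [ae_restrict_mem hΩm] with x hx
      have hxR : ‖x‖ ≤ R := by simpa using hΩsub hx
      have h1 : ‖p‖ - R ≤ ‖x - p‖ := by
        have h2 : ‖p‖ ≤ ‖x‖ + ‖x - p‖ := by
          calc ‖p‖ = ‖x - (x - p)‖ := by rw [show x - (x - p) = p by abel]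
            _ ≤ ‖x‖ + ‖x - p‖ := norm_sub_le _ _
        linarith
      calc ‖p‖ - R - 1 ≤ ‖x - p‖ - 1 := by linarith
        _ ≤ G ‖x - p‖ := hGcoer _ (norm_nonneg _)
    calc (‖p‖ - R - 1) * volT = ∫ _, (‖p‖ - R - 1) ∂μ := by
          rw [integral_const]; simp [hvolT, mul_comm, Measure.real]
      _ ≤ Φ p := integral_mono_ae (integrable_const _) (hint p) hae
  -- find a global minimizer
  have hR0 : 0 ≤ R := by
    rcases (nonempty_of_measure_ne_zero hΩpos.ne') with ⟨x, hx⟩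
    have := hΩsub hx
    simpa using le_trans (norm_nonneg x) (by simpa using this)
  set M : ℝ := R + 1 + (|Φ 0| + 1) / volT with hM
  have hM0 : 0 ≤ M := by
    rw [hM]
    have hd : 0 ≤ (|Φ 0| + 1) / volT :=
      div_nonneg (add_nonneg (abs_nonneg _) zero_le_one) hvol_pos.le
    linarith
  have hout : ∀ p : EuclideanSpace ℝ (Fin 2), M < ‖p‖ → Φ 0 < Φ p := by
    intro p hp
    have h1 : (|Φ 0| + 1) / volT * volT < (‖p‖ - R - 1) * volT := by
      apply mul_lt_mul_of_pos_right _ hvol_pos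
      rw [hM] at hp; linarith
    rw [div_mul_cancel₀ _ hvol_pos.ne'] at h1
    have := hΦlb p
    have h2 : Φ 0 ≤ |Φ 0| := le_abs_self _
    linarith
  obtain ⟨p₀, hp₀K, hp₀min⟩ := (isCompact_closedBall (0:EuclideanSpace ℝ (Fin 2)) M).exists_isMinOn
    ⟨0, Metric.mem_closedBall_self hM0⟩ hΦc.continuousOn
  have hglobal : ∀ q : EuclideanSpace ℝ (Fin 2), Φ p₀ ≤ Φ q := by
    intro q
    by_cases hq : q ∈ Metric.closedBall (0:EuclideanSpace ℝ (Fin 2)) M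
    · exact hp₀min hq
    · have : M < ‖q‖ := by
        simpa [Metric.mem_closedBall, dist_eq_norm] using lt_of_not_ge
          (fun h => hq (by simpa [Metric.mem_closedBall, dist_eq_norm] using h))
      have h0K : (0:EuclideanSpace ℝ (Fin 2)) ∈ Metric.closedBall (0:EuclideanSpace ℝ (Fin 2)) M := Metric.mem_closedBall_self hM0
      exact le_trans (hp₀min h0K) (hout q this).le
  have hlocmin : IsLocalMin Φ p₀ := by
    apply IsMinOn.isLocalMin (s := Set.univ)
    · intro q _; exact hglobal q
    · exact Filter.univ_mem
  have hderiv0 : (∫ x, F' x p₀ ∂μ) = 0 :=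
    hlocmin.hasFDerivAt_eq_zero (hΦd p₀).2
  -- conclude
  refine ⟨p₀, ?_⟩
  set f : (EuclideanSpace ℝ (Fin 2)) → (EuclideanSpace ℝ (Fin 2)) := fun x => (g ‖x - p₀‖ / ‖x - p₀‖) • (x - p₀) with hfdef
  have hfmeas : AEStronglyMeasurable f μ := by
    show AEStronglyMeasurable ((fun x => g ‖x - p₀‖ / ‖x - p₀‖) • (fun x => x - p₀)) μ
    apply AEStronglyMeasurable.smul
    · apply Measurable.aestronglyMeasurable
      exact (hgc.measurable.comp ((continuous_id.sub continuous_const).norm.measurable)).div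
        ((continuous_id.sub continuous_const).norm.measurable)
    · exact (continuous_id.sub continuous_const).aestronglyMeasurable
  have hfint : Integrable f μ := by
    apply Integrable.mono' (integrable_const (1:ℝ)) hfmeas
    filter_upwards with x
    rw [hfdef]
    simp only [norm_smul, Real.norm_eq_abs]
    rcases eq_or_ne (‖x - p₀‖) 0 with h | h
    · simp [h]
    · have hpos : 0 < ‖x - p₀‖ := lt_of_le_of_ne (norm_nonneg _) (Ne.symm h)
      rw [abs_div, abs_of_nonneg (hg01 _ (norm_nonneg _)).1, abs_of_pos hpos,
        div_mul_cancel₀ _ h]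
      exact (hg01 _ (norm_nonneg _)).2
  have hv : (∫ x, f x ∂μ) = 0 := by
    set v := ∫ x, f x ∂μ with hvdef
    have hinner : (inner ℝ v v : ℝ) = 0 := by
      have h1 : (inner ℝ v v : ℝ) = ∫ x, (inner ℝ v (f x) : ℝ) ∂μ :=
        (integral_inner hfint v).symm
      have h2 : ∀ x, (inner ℝ v (f x) : ℝ) = -(F' x p₀ v) := by
        intro x
        rw [hfdef, hF'def]
        simp only [ContinuousLinearMap.smul_apply, innerSL_apply_apply, smul_eq_mul,
          inner_smul_right]
        rw [real_inner_comm]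
        have hthis : (inner ℝ (p₀ - x) v : ℝ) = -(inner ℝ (x - p₀) v : ℝ) := by
          rw [show p₀ - x = -(x - p₀) by abel, inner_neg_left]
        rw [hthis]; ring
      have h3 : (∫ x, (F' x p₀) v ∂μ) = 0 := by
        rw [← ContinuousLinearMap.integral_apply (hΦd p₀).1 v, hderiv0]
        simp
      rw [h1]
      simp_rw [h2]
      rw [integral_neg, h3, neg_zero]
    exact inner_self_eq_zero.mp hinner
  exact hv
end

section
/- Strict decrease of the energy density at non-conformal points: if f solves the radial GL ODE on (0,1) with 0 < f < 1 and f' > 0 on (0,1), then B_ε'(r) < 0 at every r ∈ (0,1), and moreover B_ε'(r) ≤ −(2/ε²) f(r) f'(r)(1 − f(r)²) < 0. -/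
open Set

theorem energy_density_strict_decrease
    (ε : ℝ) (hε : 0 < ε) (f : ℝ → ℝ)
    (hf : ContDiffOn ℝ 2 f (Ioo 0 1))
    (hbound : ∀ r ∈ Ioo (0:ℝ) 1, 0 < f r ∧ f r < 1)
    (hf' : ∀ r ∈ Ioo (0:ℝ) 1, 0 < deriv f r)
    (hode : ∀ r ∈ Ioo (0:ℝ) 1,
      -(deriv (deriv f) r) - deriv f r / r + f r / r ^ 2
        = (1 / ε ^ 2) * f r * (1 - (f r) ^ 2)) :
    ∀ r ∈ Ioo (0:ℝ) 1,
      deriv (fun s => (1/2) * ((deriv f s) ^ 2 + (f s) ^ 2 / s ^ 2)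
          + (1 / (4 * ε ^ 2)) * ((f s) ^ 2 - 1) ^ 2) r
        ≤ -(2 / ε ^ 2) * f r * deriv f r * (1 - (f r) ^ 2) ∧
      -(2 / ε ^ 2) * f r * deriv f r * (1 - (f r) ^ 2) < 0 ∧
      deriv (fun s => (1/2) * ((deriv f s) ^ 2 + (f s) ^ 2 / s ^ 2)
          + (1 / (4 * ε ^ 2)) * ((f s) ^ 2 - 1) ^ 2) r < 0 := by
  intro r hr
  obtain ⟨hr0, hr1⟩ := hr
  have hrne : r ≠ 0 := ne_of_gt hr0
  have hεne : ε ≠ 0 := ne_of_gt hε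
  have hmem : Ioo (0:ℝ) 1 ∈ nhds r := isOpen_Ioo.mem_nhds ⟨hr0, hr1⟩
  have hc2 : ContDiffAt ℝ 2 f r := hf.contDiffAt hmem
  have hfd : DifferentiableAt ℝ f r := hc2.differentiableAt (by norm_num)
  have hderivC : ContDiffOn ℝ 1 (deriv f) (Ioo 0 1) :=
    hf.deriv_of_isOpen isOpen_Ioo (by norm_num)
  have hf'd : DifferentiableAt ℝ (deriv f) r :=
    (hderivC.contDiffAt hmem).differentiableAt one_ne_zero
  set a := f r with ha
  set b := deriv f r with hb
  set c := deriv (deriv f) r with hc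
  have h1 : HasDerivAt f b r := hfd.hasDerivAt
  have h2 : HasDerivAt (deriv f) c r := hf'd.hasDerivAt
  have hA : HasDerivAt (fun s => (deriv f s) ^ 2) (2 * b * c) r := by
    have := h2.fun_pow 2
    exact this.congr_deriv (by ring)
  have hN : HasDerivAt (fun s => (f s) ^ 2) (2 * a * b) r := by
    have := h1.fun_pow 2
    exact this.congr_deriv (by ring)
  have hD : HasDerivAt (fun s : ℝ => s ^ 2) (2 * r) r := by
    have := hasDerivAt_pow 2 r
    exact this.congr_deriv (by ring)
  have hr2ne : r ^ 2 ≠ 0 := pow_ne_zero 2 hrne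
  have hQ : HasDerivAt (fun s => (f s) ^ 2 / s ^ 2)
      ((2 * a * b * r ^ 2 - a ^ 2 * (2 * r)) / (r ^ 2) ^ 2) r := hN.div hD hr2ne
  have hP : HasDerivAt (fun s => ((f s) ^ 2 - 1) ^ 2)
      (2 * (a ^ 2 - 1) * (2 * a * b)) r := by
    have := (hN.sub_const 1).fun_pow 2
    exact this.congr_deriv (by ring)
  have H : HasDerivAt (fun s => (1/2) * ((deriv f s) ^ 2 + (f s) ^ 2 / s ^ 2)
      + (1 / (4 * ε ^ 2)) * ((f s) ^ 2 - 1) ^ 2)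
      ((1/2) * (2 * b * c + (2 * a * b * r ^ 2 - a ^ 2 * (2 * r)) / (r ^ 2) ^ 2)
        + (1 / (4 * ε ^ 2)) * (2 * (a ^ 2 - 1) * (2 * a * b))) r :=
    ((hA.add hQ).const_mul (1/2)).add (hP.const_mul (1 / (4 * ε ^ 2)))
  have hderiv : deriv (fun s => (1/2) * ((deriv f s) ^ 2 + (f s) ^ 2 / s ^ 2)
      + (1 / (4 * ε ^ 2)) * ((f s) ^ 2 - 1) ^ 2) r
      = (1/2) * (2 * b * c + (2 * a * b * r ^ 2 - a ^ 2 * (2 * r)) / (r ^ 2) ^ 2)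
        + (1 / (4 * ε ^ 2)) * (2 * (a ^ 2 - 1) * (2 * a * b)) := H.deriv
  have hodeR := hode r ⟨hr0, hr1⟩
  have hcval : c = -(b / r) + a / r ^ 2 - (1 / ε ^ 2) * a * (1 - a ^ 2) := by
    have := hodeR
    field_simp at this ⊢
    linarith
  have hkey : (1/2) * (2 * b * c + (2 * a * b * r ^ 2 - a ^ 2 * (2 * r)) / (r ^ 2) ^ 2)
        + (1 / (4 * ε ^ 2)) * (2 * (a ^ 2 - 1) * (2 * a * b))
      = -(1/r) * (b - a / r) ^ 2 + (-(2 / ε ^ 2) * a * b * (1 - a ^ 2)) := by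
    rw [hcval]
    field_simp
    ring
  have hsq : -(1/r) * (b - a / r) ^ 2 ≤ 0 := by
    have h1 : 0 ≤ (b - a / r) ^ 2 := sq_nonneg _
    have h2 : 0 < 1 / r := by positivity
    nlinarith
  obtain ⟨haf, haf1⟩ := hbound r ⟨hr0, hr1⟩
  have hbpos : 0 < b := hf' r ⟨hr0, hr1⟩
  have h1a2 : 0 < 1 - a ^ 2 := by nlinarith
  have hneg : -(2 / ε ^ 2) * a * b * (1 - a ^ 2) < 0 := by
    have : 0 < (2 / ε ^ 2) * a * b * (1 - a ^ 2) := by positivity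
    linarith
  refine ⟨?_, hneg, ?_⟩
  · rw [hderiv, hkey]; linarith
  · rw [hderiv, hkey]; linarith
end
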